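/- Let N₁,N₂,N₃ be standard Gaussians (each N(0,1)) with pairwise correlations E[N_i N_{i+1}] = -1/3 (indices mod 3), and let g_i = sgn(x - t_i) be threshold functions. If for all i and all u ∈ {-1,1}, P[g_i(N_i) = u, g_{i+1}(N_{i+1}) = -u] ≤ 1-ε, then P[g_1(N_1) = g_2(N_2) = g_3(N_3)] ≥ (ε/2)^{18}. -/

import Mathlib

open MeasureTheory ProbabilityTheory

/-- The standard Gaussian measure on `ℝ³` (product of three standard Gaussians). -/
noncomputable def stdGauss3 : Measure (Fin 3 → ℝ) :=
  Measure.pi fun _ : Fin 3 => gaussianReal 0 1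

/-- The threshold function `sgn(x - t)`. -/
noncomputable def thresh (t : ℝ) (x : ℝ) : ℝ := if t ≤ x then 1 else -1


namespace ArrowAux

open Real Set
open scoped ENNReal

/-- Tonelli for products over `Fin 3`. -/
lemma lmarginal_prod (f : Fin 3 → ℝ → ℝ≥0∞) (hf : ∀ k, Measurable (f k))
    (s : Finset (Fin 3)) (x : Fin 3 → ℝ) :
    (∫⋯∫⁻_s, (fun ω => ∏ k, f k (ω k)) ∂(fun _ => (volume : Measure ℝ))) x
      = (∏ k ∈ s, ∫⁻ y, f k y) * ∏ k ∈ sᶜ, f k (x k) := by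
  classical
  induction s using Finset.induction generalizing x with
  | empty => simp
  | insert i s hi ih =>
    have hfm : Measurable fun ω : Fin 3 → ℝ => ∏ k, f k (ω k) :=
      Finset.measurable_prod _ fun k _ => (hf k).comp (measurable_pi_apply k)
    rw [lmarginal_insert _ hfm hi]
    have : ∀ xi : ℝ,
        (∫⋯∫⁻_s, (fun ω => ∏ k, f k (ω k)) ∂(fun _ => (volume : Measure ℝ)))
          (Function.update x i xi)
        = (f i xi * ∏ k ∈ (insert i s)ᶜ, f k (x k)) * ∏ k ∈ s, ∫⁻ y, f k y := by
      intro xi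
      rw [ih]
      have hsplit : sᶜ = insert i ((insert i s)ᶜ) := by
        ext k; simp [Finset.mem_compl, Finset.mem_insert]
        by_cases hk : k = i <;> simp [hk, hi]
      rw [hsplit, Finset.prod_insert (by simp)]
      have h1 : Function.update x i xi i = xi := by simp
      have h2 : ∀ k ∈ (insert i s)ᶜ, f k (Function.update x i xi k) = f k (x k) := by
        intro k hk
        have : k ≠ i := by intro h; subst h; simp at hk
        simp [Function.update_of_ne this]
      rw [h1, Finset.prod_congr rfl h2]
      ring
    simp_rw [this]
    rw [lintegral_mul_const, lintegral_mul_const, Finset.prod_insert hi]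
    · ring
    · exact hf i
    · exact (hf i).mul measurable_const

lemma lintegral_pi3 (f : Fin 3 → ℝ → ℝ≥0∞) (hf : ∀ k, Measurable (f k)) :
    ∫⁻ ω, (∏ k, f k (ω k)) ∂(volume : Measure (Fin 3 → ℝ)) = ∏ k, ∫⁻ y, f k y := by
  rw [volume_pi, lintegral_eq_lmarginal_univ (0 : Fin 3 → ℝ),
    lmarginal_prod f hf Finset.univ]
  simp

/-- The density of `stdGauss3` w.r.t. Lebesgue. -/
noncomputable def dens (ω : Fin 3 → ℝ) : ℝ≥0∞ := ∏ k, gaussianPDF 0 1 (ω k)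

lemma measurable_dens : Measurable dens :=
  Finset.measurable_prod _ fun k _ =>
    (measurable_gaussianPDF 0 1).comp (measurable_pi_apply k)

lemma stdGauss3_eq : stdGauss3 = (volume : Measure (Fin 3 → ℝ)).withDensity dens := by
  refine (Measure.pi_eq fun s hs => ?_)
  rw [withDensity_apply _ (MeasurableSet.univ_pi hs)]
  have : ∀ ω : Fin 3 → ℝ, (Set.univ.pi s).indicator dens ω
      = ∏ k, (s k).indicator (gaussianPDF 0 1) (ω k) := by
    intro ω
    by_cases h : ω ∈ Set.univ.pi s
    · rw [Set.indicator_of_mem h]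
      refine Finset.prod_congr rfl fun k _ => ?_
      rw [Set.indicator_of_mem (h k (Set.mem_univ k))]
    · rw [Set.indicator_of_notMem h]
      have hex : ∃ k, ω k ∉ s k := by simpa [Set.mem_univ_pi] using h
      obtain ⟨k, hk⟩ := hex
      symm
      apply Finset.prod_eq_zero (Finset.mem_univ k)
      rw [Set.indicator_of_notMem hk]
  rw [← lintegral_indicator (MeasurableSet.univ_pi hs) _]
  simp_rw [this]
  rw [lintegral_pi3 _ (fun k => (measurable_gaussianPDF 0 1).indicator (hs k))]
  refine Finset.prod_congr rfl fun k _ => ?_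
  rw [lintegral_indicator (hs k) _, gaussianReal_apply 0 one_ne_zero (s k)]
instance : IsProbabilityMeasure stdGauss3 := by unfold stdGauss3; infer_instance

lemma pdf_eq (x : ℝ) : gaussianPDFReal 0 1 x = (Real.sqrt (2*π))⁻¹ * Real.exp (-x^2/2) := by
  simp [gaussianPDFReal]

lemma dens_eq_ofReal (ω : Fin 3 → ℝ) :
    dens ω = ENNReal.ofReal (∏ k, gaussianPDFReal 0 1 (ω k)) := by
  rw [dens, ENNReal.ofReal_prod_of_nonneg (fun k _ => gaussianPDFReal_nonneg 0 1 (ω k))]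
  rfl

lemma prod_pdf_eq (η : Fin 3 → ℝ) :
    ∏ k, gaussianPDFReal 0 1 (η k)
      = ((Real.sqrt (2*π))⁻¹)^3 * Real.exp (-(∑ k, (η k)^2)/2) := by
  simp only [pdf_eq, Fin.prod_univ_three, Fin.sum_univ_three]
  rw [show -((η 0)^2 + (η 1)^2 + (η 2)^2)/2
      = (-(η 0)^2/2) + ((-(η 1)^2/2) + (-(η 2)^2/2)) by ring,
    Real.exp_add, Real.exp_add]
  ring

lemma measurable_lin (a : Fin 3 → ℝ) : Measurable fun ω : Fin 3 → ℝ => ∑ k, a k * ω k :=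
  Finset.measurable_sum _ fun k _ => (measurable_const_mul (a k)).comp (measurable_pi_apply k)

lemma dens_neg (η : Fin 3 → ℝ) : dens (-η) = dens η := by
  rw [dens_eq_ofReal, dens_eq_ofReal]
  congr 1
  refine Finset.prod_congr rfl fun k _ => ?_
  simp [pdf_eq, neg_sq]

/-- The hyperplane `{ω | ∑ a k * ω k = 0}` is `stdGauss3`-null when `a ≠ 0`. -/
lemma hyperplane_null (a : Fin 3 → ℝ) (ha : ∑ k, a k ^ 2 = 1) :
    stdGauss3 {ω : Fin 3 → ℝ | ∑ k, a k * ω k = 0} = 0 := by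
  have hone : (∑ k, a k * a k) = 1 := by
    rw [← ha]; exact Finset.sum_congr rfl fun k _ => (sq (a k)).symm
  set φ : (Fin 3 → ℝ) →ₗ[ℝ] ℝ := ∑ k, a k • (LinearMap.proj k : (Fin 3 → ℝ) →ₗ[ℝ] ℝ) with hφ
  have hφapp : ∀ ω, φ ω = ∑ k, a k * ω k := by
    intro ω
    simp [hφ, LinearMap.sum_apply, LinearMap.proj_apply, smul_eq_mul]
  have hker : LinearMap.ker φ ≠ ⊤ := by
    intro h
    have := LinearMap.ker_eq_top.mp h
    have h1 : φ a = 0 := by rw [this]; rfl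
    rw [hφapp, hone] at h1
    norm_num at h1
  have hvol : (volume : Measure (Fin 3 → ℝ)) {ω | ∑ k, a k * ω k = 0} = 0 := by
    have hset : {ω : Fin 3 → ℝ | ∑ k, a k * ω k = 0} = (LinearMap.ker φ : Set (Fin 3 → ℝ)) := by
      ext ω
      simp [LinearMap.mem_ker, hφapp]
    rw [hset]
    exact Measure.addHaar_submodule volume _ hker
  rw [stdGauss3_eq]
  exact withDensity_absolutelyContinuous volume dens hvol

/-- `stdGauss3 {0 ≤ a·ω} ≤ 1/2` for a unit vector `a`. -/
lemma half_space_half (a : Fin 3 → ℝ) (ha : ∑ k, a k ^ 2 = 1) :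
    stdGauss3 {ω : Fin 3 → ℝ | 0 ≤ ∑ k, a k * ω k} ≤ ENNReal.ofReal (1/2) := by
  set S₀ := {ω : Fin 3 → ℝ | 0 ≤ ∑ k, a k * ω k} with hS₀
  set S₁ := {ω : Fin 3 → ℝ | ∑ k, a k * ω k ≤ 0} with hS₁
  have hS₀m : MeasurableSet S₀ := measurableSet_le measurable_const (measurable_lin a)
  have hS₁m : MeasurableSet S₁ := measurableSet_le (measurable_lin a) measurable_const
  -- symmetry
  have hsym : stdGauss3 S₁ = stdGauss3 S₀ := by
    have h1 : stdGauss3 S₁ = ∫⁻ η, S₁.indicator dens η ∂(volume : Measure (Fin 3 → ℝ)) := by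
      rw [stdGauss3_eq, withDensity_apply _ hS₁m, lintegral_indicator hS₁m]
    have h0 : stdGauss3 S₀ = ∫⁻ η, S₀.indicator dens η ∂(volume : Measure (Fin 3 → ℝ)) := by
      rw [stdGauss3_eq, withDensity_apply _ hS₀m, lintegral_indicator hS₀m]
    rw [h1, h0]
    have key : ∀ η : Fin 3 → ℝ, S₁.indicator dens (-η) = S₀.indicator dens η := by
      intro η
      by_cases h : η ∈ S₀
      · have hmem : -η ∈ S₁ := by
          simp only [hS₁, Set.mem_setOf_eq]
          have : ∑ k, a k * (-η) k = -(∑ k, a k * η k) := by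
            simp [mul_neg, Finset.sum_neg_distrib]
          rw [this]
          exact neg_nonpos.mpr h
        rw [Set.indicator_of_mem hmem, Set.indicator_of_mem h, dens_neg]
      · have hmem : -η ∉ S₁ := by
          simp only [hS₁, Set.mem_setOf_eq] at h ⊢
          have : ∑ k, a k * (-η) k = -(∑ k, a k * η k) := by
            simp [mul_neg, Finset.sum_neg_distrib]
          rw [this]
          simp only [hS₀, Set.mem_setOf_eq] at h
          push_neg at h ⊢
          linarith
        rw [Set.indicator_of_notMem hmem, Set.indicator_of_notMem h]
    calc ∫⁻ η, S₁.indicator dens η ∂(volume : Measure (Fin 3 → ℝ))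
        = ∫⁻ η, S₁.indicator dens (-η) ∂(volume : Measure (Fin 3 → ℝ)) := by
          have hmap := lintegral_map_equiv (μ := (volume : Measure (Fin 3 → ℝ)))
            (S₁.indicator dens) (MeasurableEquiv.neg (Fin 3 → ℝ))
          have hco : (⇑(MeasurableEquiv.neg (Fin 3 → ℝ))) = (Neg.neg : (Fin 3 → ℝ) → (Fin 3 → ℝ)) := rfl
          rw [hco, Measure.map_neg_eq_self] at hmap
          simpa using hmap
      _ = ∫⁻ η, S₀.indicator dens η ∂(volume : Measure (Fin 3 → ℝ)) := by
          exact lintegral_congr fun η => key η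
  have hunion : S₀ ∪ S₁ = Set.univ := by
    ext ω; simp only [Set.mem_union, Set.mem_univ, iff_true, hS₀, hS₁, Set.mem_setOf_eq]
    exact le_total 0 _
  have hinter : stdGauss3 (S₀ ∩ S₁) = 0 := by
    have : S₀ ∩ S₁ ⊆ {ω : Fin 3 → ℝ | ∑ k, a k * ω k = 0} := by
      rintro ω ⟨h0, h1⟩
      exact le_antisymm h1 h0
    exact measure_mono_null this (hyperplane_null a ha)
  have htot : stdGauss3 S₀ + stdGauss3 S₁ = 1 := by
    rw [← measure_union_add_inter S₀ hS₁m, hunion, hinter, measure_univ, add_zero]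
  rw [hsym] at htot
  by_contra hcon
  push_neg at hcon
  have h2 : (1 : ℝ≥0∞) < stdGauss3 S₀ + stdGauss3 S₀ := by
    calc (1 : ℝ≥0∞) = ENNReal.ofReal (1/2) + ENNReal.ofReal (1/2) := by
          rw [← ENNReal.ofReal_add (by norm_num) (by norm_num)]
          norm_num
      _ < stdGauss3 S₀ + stdGauss3 S₀ := ENNReal.add_lt_add hcon hcon
  rw [htot] at h2
  exact lt_irrefl _ h2

/-- Gaussian tail bound for a unit linear functional: `P[a·ω ≥ s] ≤ (1/2)·exp(-s²/2)`. -/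
lemma tail_bound (a : Fin 3 → ℝ) (ha : ∑ k, a k ^ 2 = 1) {s : ℝ} (hs : 0 ≤ s) :
    stdGauss3 {ω : Fin 3 → ℝ | s ≤ ∑ k, a k * ω k}
      ≤ ENNReal.ofReal ((1/2) * Real.exp (-s^2/2)) := by
  set S := {ω : Fin 3 → ℝ | s ≤ ∑ k, a k * ω k} with hS
  set S₀ := {ω : Fin 3 → ℝ | 0 ≤ ∑ k, a k * ω k} with hS₀
  have hSm : MeasurableSet S := measurableSet_le measurable_const (measurable_lin a)
  have hS₀m : MeasurableSet S₀ := measurableSet_le measurable_const (measurable_lin a)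
  have hrep : stdGauss3 S = ∫⁻ η, S.indicator dens (η + s • a) ∂(volume : Measure (Fin 3 → ℝ)) := by
    rw [stdGauss3_eq, withDensity_apply _ hSm, ← lintegral_indicator hSm,
      ← lintegral_add_right_eq_self (S.indicator dens) (s • a)]
  have hpt : ∀ η : Fin 3 → ℝ, S.indicator dens (η + s • a)
      ≤ ENNReal.ofReal (Real.exp (-s^2/2)) * S₀.indicator dens η := by
    intro η
    by_cases h : (η + s • a) ∈ S
    · have hsum : ∑ k, a k * (η + s • a) k = (∑ k, a k * η k) + s := by
        simp only [Pi.add_apply, Pi.smul_apply, smul_eq_mul, Fin.sum_univ_three] at ha ⊢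
        linear_combination s * ha
      have hmem : s ≤ ∑ k, a k * (η + s • a) k := h
      rw [hsum] at hmem
      have hη : η ∈ S₀ := by simp only [hS₀, Set.mem_setOf_eq]; linarith
      have hη' : 0 ≤ ∑ k, a k * η k := hη
      rw [Set.indicator_of_mem h, Set.indicator_of_mem hη, dens_eq_ofReal, dens_eq_ofReal,
        ← ENNReal.ofReal_mul (le_of_lt (Real.exp_pos _))]
      apply ENNReal.ofReal_le_ofReal
      have hcoord : ∀ k, (η + s • a) k = η k + s * a k := fun k => by simp
      calc ∏ k, gaussianPDFReal 0 1 ((η + s • a) k)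
          = ((Real.sqrt (2*π))⁻¹)^3 * Real.exp (-(∑ k, ((η + s • a) k)^2)/2) := prod_pdf_eq _
        _ ≤ ((Real.sqrt (2*π))⁻¹)^3 * Real.exp (-s^2/2 + -(∑ k, (η k)^2)/2) := by
            apply mul_le_mul_of_nonneg_left _ (by positivity)
            apply Real.exp_le_exp.mpr
            simp only [hcoord, Fin.sum_univ_three] at ha hη' ⊢
            nlinarith [mul_nonneg hs hη']
        _ = Real.exp (-s^2/2) * (((Real.sqrt (2*π))⁻¹)^3 * Real.exp (-(∑ k, (η k)^2)/2)) := by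
            rw [Real.exp_add]; ring
        _ = Real.exp (-s^2/2) * ∏ k, gaussianPDFReal 0 1 (η k) := by rw [prod_pdf_eq]
    · rw [Set.indicator_of_notMem h]
      exact zero_le
  calc stdGauss3 S
      = ∫⁻ η, S.indicator dens (η + s • a) ∂(volume : Measure (Fin 3 → ℝ)) := hrep
    _ ≤ ∫⁻ η, ENNReal.ofReal (Real.exp (-s^2/2)) * S₀.indicator dens η
          ∂(volume : Measure (Fin 3 → ℝ)) := lintegral_mono hpt
    _ = ENNReal.ofReal (Real.exp (-s^2/2)) * ∫⁻ η, S₀.indicator dens η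
          ∂(volume : Measure (Fin 3 → ℝ)) :=
        lintegral_const_mul _ (measurable_dens.indicator hS₀m)
    _ = ENNReal.ofReal (Real.exp (-s^2/2)) * stdGauss3 S₀ := by
        rw [stdGauss3_eq, withDensity_apply _ hS₀m, lintegral_indicator hS₀m]
    _ ≤ ENNReal.ofReal (Real.exp (-s^2/2)) * ENNReal.ofReal (1/2) :=
        mul_le_mul_right (half_space_half a ha) _
    _ = ENNReal.ofReal ((1/2) * Real.exp (-s^2/2)) := by
        rw [← ENNReal.ofReal_mul (le_of_lt (Real.exp_pos _))]
        ring_nf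

lemma icc_lower (b : ℝ) {δ : ℝ} (hδ : 0 ≤ δ) :
    ENNReal.ofReal ((2*δ) * ((Real.sqrt (2*π))⁻¹ * Real.exp (-(|b|+δ)^2/2)))
      ≤ gaussianReal 0 1 (Icc (b-δ) (b+δ)) := by
  rw [gaussianReal_of_var_ne_zero 0 one_ne_zero, withDensity_apply _ measurableSet_Icc]
  have hle : ∀ x ∈ Icc (b-δ) (b+δ),
      ENNReal.ofReal ((Real.sqrt (2*π))⁻¹ * Real.exp (-(|b|+δ)^2/2)) ≤ gaussianPDF 0 1 x := by
    intro x hx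
    rw [gaussianPDF_def]
    apply ENNReal.ofReal_le_ofReal
    rw [pdf_eq]
    apply mul_le_mul_of_nonneg_left _ (by positivity)
    apply Real.exp_le_exp.mpr
    have hxb : |x| ≤ |b| + δ := by
      rw [abs_le]
      obtain ⟨h1, h2⟩ := hx
      constructor
      · linarith [neg_abs_le b]
      · linarith [le_abs_self b]
    nlinarith [abs_nonneg x, sq_abs x]
  calc ENNReal.ofReal ((2*δ) * ((Real.sqrt (2*π))⁻¹ * Real.exp (-(|b|+δ)^2/2)))
      = ENNReal.ofReal ((Real.sqrt (2*π))⁻¹ * Real.exp (-(|b|+δ)^2/2))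
          * volume (Icc (b-δ) (b+δ)) := by
        rw [Real.volume_Icc, show b + δ - (b - δ) = 2*δ by ring,
          ← ENNReal.ofReal_mul (by positivity)]
        ring_nf
    _ = ∫⁻ _x in Icc (b-δ) (b+δ),
          ENNReal.ofReal ((Real.sqrt (2*π))⁻¹ * Real.exp (-(|b|+δ)^2/2)) := by
        rw [setLIntegral_const]
    _ ≤ ∫⁻ x in Icc (b-δ) (b+δ), gaussianPDF 0 1 x :=
        setLIntegral_mono (measurable_gaussianPDF 0 1) hle

lemma cube_lower (b : Fin 3 → ℝ) :
    ENNReal.ofReal (∏ k, ((2*(1/4:ℝ)) * ((Real.sqrt (2*π))⁻¹ * Real.exp (-(|b k|+1/4)^2/2))))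
      ≤ stdGauss3 (Set.univ.pi fun k => Icc (b k - 1/4) (b k + 1/4)) := by
  rw [show stdGauss3 = Measure.pi fun _ : Fin 3 => gaussianReal 0 1 from rfl, Measure.pi_pi]
  rw [ENNReal.ofReal_prod_of_nonneg (fun k _ => by positivity)]
  exact Finset.prod_le_prod' fun k _ => icc_lower (b k) (by norm_num)

lemma exp_four_le : Real.exp 4 ≤ 55 := by
  have h1 : Real.exp 1 ≤ 2.7182818286 := le_of_lt Real.exp_one_lt_d9
  have h4 : Real.exp 4 = (Real.exp 1)^4 := by
    rw [← Real.exp_nat_mul]; norm_num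
  rw [h4]
  calc (Real.exp 1)^4 ≤ (2.7182818286:ℝ)^4 :=
        pow_le_pow_left₀ (le_of_lt (Real.exp_pos 1)) h1 4
    _ ≤ 55 := by norm_num

lemma sqrt2pi_cube_le : (Real.sqrt (2*π))^3 ≤ 16 := by
  set u := Real.sqrt (2*π) with hu
  have hu0 : 0 ≤ u := Real.sqrt_nonneg _
  have hu2 : u^2 = 2*π := Real.sq_sqrt (by positivity)
  have hπ : π < 3.15 := Real.pi_lt_d2
  have hu25 : u ≤ 2.52 := by nlinarith [sq_nonneg (u - 2.52)]
  nlinarith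

set_option maxHeartbeats 1000000 in
lemma final_real (T : ℝ) (hT : 0 ≤ T) (w : Fin 3 → ℝ) (hw1 : ∑ k, (w k)^2 = 1)
    {ε : ℝ} (hε0 : 0 < ε) (hεT : ε/2 ≤ (1/2) * Real.exp (-T^2/2)) :
    (ε/2)^18 ≤ ∏ k, ((2*(1/4:ℝ)) *
      ((Real.sqrt (2*π))⁻¹ * Real.exp (-(|(3*(T+1/2)) * w k|+1/4)^2/2))) := by
  set u := Real.sqrt (2*π) with hu
  have hu0 : 0 < u := Real.sqrt_pos.mpr (by positivity)
  set c := 3*(T+1/2) with hc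
  have hc0 : 0 ≤ c := by rw [hc]; linarith
  set X := ∑ k, (|c * w k| + (1/4:ℝ))^2 with hX
  -- sum of |w k| is at most 7/4
  have habs : |w 0| + |w 1| + |w 2| ≤ 7/4 := by
    simp only [Fin.sum_univ_three] at hw1
    have hS2 : (|w 0| + |w 1| + |w 2|)^2 ≤ 3 := by
      nlinarith [sq_abs (w 0), sq_abs (w 1), sq_abs (w 2), sq_nonneg (|w 0| - |w 1|),
        sq_nonneg (|w 0| - |w 2|), sq_nonneg (|w 1| - |w 2|)]
    nlinarith [hS2, abs_nonneg (w 0), abs_nonneg (w 1), abs_nonneg (w 2)]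
  have hXle : X ≤ (3*T+2)^2 := by
    rw [hX]
    simp only [Fin.sum_univ_three, abs_mul, abs_of_nonneg hc0]
    simp only [Fin.sum_univ_three] at hw1
    have e0 := sq_abs (w 0); have e1 := sq_abs (w 1); have e2 := sq_abs (w 2)
    have key : (c*|w 0| + 1/4)^2 + (c*|w 1| + 1/4)^2 + (c*|w 2| + 1/4)^2
        = c^2 * (w 0^2 + w 1^2 + w 2^2) + (c/2)*(|w 0| + |w 1| + |w 2|) + 3/16 := by
      linear_combination c^2*e0 + c^2*e1 + c^2*e2
    have hce : (3*T+2)^2 = c^2 + c + 1/4 := by rw [hc]; ring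
    rw [key, hw1, hce]
    nlinarith [mul_le_mul_of_nonneg_left habs (by positivity : (0:ℝ) ≤ c/2)]
  have hprod : ∏ k, ((2*(1/4:ℝ)) * (u⁻¹ * Real.exp (-(|c * w k|+1/4)^2/2)))
      = (1/2)^3 * (u⁻¹)^3 * Real.exp (-X/2) := by
    simp only [Fin.prod_univ_three]
    rw [show -X/2 = -(|c * w 0|+1/4)^2/2 + (-(|c * w 1|+1/4)^2/2 + -(|c * w 2|+1/4)^2/2) by
      rw [hX]; simp only [Fin.sum_univ_three]; ring]
    rw [Real.exp_add, Real.exp_add]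
    ring
  rw [hprod]
  have step1 : (ε/2)^18 ≤ ((1/2) * Real.exp (-T^2/2))^18 :=
    pow_le_pow_left₀ (by linarith) hεT 18
  have step2 : ((1/2:ℝ) * Real.exp (-T^2/2))^18 = (1/2)^18 * Real.exp (-(9:ℝ)*T^2) := by
    rw [mul_pow, ← Real.exp_nat_mul]
    push_cast
    ring_nf
  have step3 : Real.exp (-(9:ℝ)*T^2) ≤ Real.exp 4 * Real.exp (-(3*T+2)^2/2) := by
    rw [← Real.exp_add]
    apply Real.exp_le_exp.mpr
    nlinarith [sq_nonneg (3*T-2)]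
  have step4 : Real.exp (-(3*T+2)^2/2) ≤ Real.exp (-X/2) := by
    apply Real.exp_le_exp.mpr
    linarith
  have hconst : (1/2:ℝ)^18 * Real.exp 4 ≤ (1/2)^3 * (u⁻¹)^3 := by
    have h16 : u^3 ≤ 16 := sqrt2pi_cube_le
    have hinv : (1/16:ℝ) ≤ (u⁻¹)^3 := by
      rw [inv_pow]
      rw [le_inv_comm₀ (by norm_num) (by positivity)]
      calc u^3 ≤ 16 := h16
        _ = (1/16:ℝ)⁻¹ := by norm_num
    calc (1/2:ℝ)^18 * Real.exp 4 ≤ (1/2)^18 * 55 := by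
          nlinarith [exp_four_le]
      _ ≤ (1/2)^3 * (1/16) := by norm_num
      _ ≤ (1/2)^3 * (u⁻¹)^3 := by nlinarith
  calc (ε/2)^18 ≤ (1/2)^18 * Real.exp (-(9:ℝ)*T^2) := by rw [← step2]; exact step1
    _ ≤ (1/2)^18 * (Real.exp 4 * Real.exp (-(3*T+2)^2/2)) := by nlinarith [Real.exp_pos (-(9:ℝ)*T^2)]
    _ ≤ (1/2)^18 * (Real.exp 4 * Real.exp (-X/2)) := by
        have := Real.exp_pos (4:ℝ)
        nlinarith [step4, Real.exp_pos (-(3*T+2)^2/2)]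
    _ = ((1/2)^18 * Real.exp 4) * Real.exp (-X/2) := by ring
    _ ≤ ((1/2)^3 * (u⁻¹)^3) * Real.exp (-X/2) :=
        mul_le_mul_of_nonneg_right hconst (le_of_lt (Real.exp_pos _))
    _ = (1/2)^3 * (u⁻¹)^3 * Real.exp (-X/2) := by ring

lemma mul_dev_lower (a x b : ℝ) (h1 : b - 1/4 ≤ x) (h2 : x ≤ b + 1/4) :
    a * b - |a| * (1/4) ≤ a * x := by
  rcases le_or_gt 0 a with ha | ha
  · rw [abs_of_nonneg ha]; nlinarith
  · rw [abs_of_neg ha]; nlinarith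

lemma mul_dev_upper (a x b : ℝ) (h1 : b - 1/4 ≤ x) (h2 : x ≤ b + 1/4) :
    a * x ≤ a * b + |a| * (1/4) := by
  rcases le_or_gt 0 a with ha | ha
  · rw [abs_of_nonneg ha]; nlinarith
  · rw [abs_of_neg ha]; nlinarith

lemma abs3_le (a : Fin 3 → ℝ) (ha : ∑ k, a k ^ 2 = 1) : |a 0| + |a 1| + |a 2| ≤ 7/4 := by
  simp only [Fin.sum_univ_three] at ha
  have hS2 : (|a 0| + |a 1| + |a 2|)^2 ≤ 3 := by
    nlinarith [sq_abs (a 0), sq_abs (a 1), sq_abs (a 2), sq_nonneg (|a 0| - |a 1|),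
      sq_nonneg (|a 0| - |a 2|), sq_nonneg (|a 1| - |a 2|)]
  nlinarith [hS2, abs_nonneg (a 0), abs_nonneg (a 1), abs_nonneg (a 2)]

lemma main_from (w : Fin 3 → ℝ) (hw1 : ∑ k, w k ^ 2 = 1) (T : ℝ) (hT : 0 ≤ T)
    {ε : ℝ} (hε0 : 0 < ε) (hεT : ε/2 ≤ (1/2) * Real.exp (-T^2/2))
    (S : Set (Fin 3 → ℝ))
    (hsub : (Set.univ.pi fun k =>
      Icc ((3*(T+1/2)) * w k - 1/4) ((3*(T+1/2)) * w k + 1/4)) ⊆ S) :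
    (ε/2)^18 ≤ (stdGauss3 S).toReal := by
  have h1 := final_real T hT w hw1 hε0 hεT
  have h2 := cube_lower (fun k => (3*(T+1/2)) * w k)
  have h3 : ENNReal.ofReal ((ε/2)^18) ≤ stdGauss3 S := by
    refine le_trans (ENNReal.ofReal_le_ofReal h1) (le_trans ?_ (measure_mono hsub))
    exact h2
  rw [← ENNReal.ofReal_le_iff_le_toReal (measure_ne_top _ _)]
  exact h3

/-- Probability measure bookkeeping: subadditivity in `toReal`. -/
lemma toReal_le_add {S U V : Set (Fin 3 → ℝ)} (h : S ⊆ U ∪ V) :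
    (stdGauss3 S).toReal ≤ (stdGauss3 U).toReal + (stdGauss3 V).toReal := by
  rw [← ENNReal.toReal_add (measure_ne_top _ _) (measure_ne_top _ _)]
  exact ENNReal.toReal_mono (by finiteness)
    (le_trans (measure_mono h) (measure_union_le U V))

lemma toReal_compl {S : Set (Fin 3 → ℝ)} (hS : MeasurableSet S) :
    (stdGauss3 Sᶜ).toReal = 1 - (stdGauss3 S).toReal := by
  rw [prob_compl_eq_one_sub hS, ENNReal.toReal_sub_of_le prob_le_one ENNReal.one_ne_top]
  simp

end ArrowAux

open ArrowAux in
set_option maxHeartbeats 1000000 in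
/-- Gaussian Arrow theorem for threshold functions: let `N₁,N₂,N₃` be standard
Gaussians with pairwise correlations `E[N_i N_{i+1}] = -1/3` (realized as linear images
`N i = Σ_k A i k · ω k` of a standard Gaussian vector `ω`, where the rows of `A` have
unit norm and consecutive inner products `-1/3`), and let `g_i = sgn(· - t_i)`.
If for all `i` and `u ∈ {±1}`, `P[g_i(N_i) = u, g_{i+1}(N_{i+1}) = -u] ≤ 1 - ε`,
then `P[g₁(N₁) = g₂(N₂) = g₃(N₃)] ≥ (ε/2)^18`. -/
theorem stmt_13 (A : Matrix (Fin 3) (Fin 3) ℝ)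
    (hvar : ∀ i : Fin 3, ∑ k, A i k ^ 2 = 1)
    (hcov : ∀ i : Fin 3, ∑ k, A i k * A (i + 1) k = -1/3)
    (t : Fin 3 → ℝ) (ε : ℝ) (hε0 : 0 < ε) (hε1 : ε ≤ 1)
    (hnd : ∀ (i : Fin 3) (u : ℝ), u = 1 ∨ u = -1 →
      (stdGauss3 {ω | thresh (t i) (∑ k, A i k * ω k) = u ∧
          thresh (t (i + 1)) (∑ k, A (i + 1) k * ω k) = -u}).toReal ≤ 1 - ε) :
    (ε/2)^18 ≤ (stdGauss3 {ω |
        thresh (t 0) (∑ k, A 0 k * ω k) = thresh (t 1) (∑ k, A 1 k * ω k) ∧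
        thresh (t 1) (∑ k, A 1 k * ω k) = thresh (t 2) (∑ k, A 2 k * ω k)}).toReal := by
  classical
  set E : Fin 3 → Set (Fin 3 → ℝ) := fun i => {ω | t i ≤ ∑ k, A i k * ω k} with hE
  have hEm : ∀ i, MeasurableSet (E i) := fun i =>
    measurableSet_le measurable_const (measurable_lin (A i))
  -- reformulate the hypothesis
  have hnd1 : ∀ i, (stdGauss3 (E i ∩ (E (i+1))ᶜ)).toReal ≤ 1 - ε := by
    intro i
    have h := hnd i 1 (Or.inl rfl)
    have hs : {ω : Fin 3 → ℝ | thresh (t i) (∑ k, A i k * ω k) = 1 ∧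
        thresh (t (i+1)) (∑ k, A (i+1) k * ω k) = -1} = E i ∩ (E (i+1))ᶜ := by
      ext ω
      simp only [Set.mem_setOf_eq, Set.mem_inter_iff, Set.mem_compl_iff, hE, thresh]
      constructor
      · rintro ⟨h1, h2⟩
        refine ⟨?_, ?_⟩
        · by_contra hc; rw [if_neg hc] at h1; norm_num at h1
        · intro hc; rw [if_pos hc] at h2; norm_num at h2
      · rintro ⟨h1, h2⟩
        rw [if_pos h1, if_neg h2]
        norm_num
    rwa [hs] at h
  have hnd2 : ∀ i, (stdGauss3 ((E i)ᶜ ∩ E (i+1))).toReal ≤ 1 - ε := by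
    intro i
    have h := hnd i (-1) (Or.inr rfl)
    have hs : {ω : Fin 3 → ℝ | thresh (t i) (∑ k, A i k * ω k) = -1 ∧
        thresh (t (i+1)) (∑ k, A (i+1) k * ω k) = -(-1)} = (E i)ᶜ ∩ E (i+1) := by
      ext ω
      simp only [Set.mem_setOf_eq, Set.mem_inter_iff, Set.mem_compl_iff, hE, thresh]
      constructor
      · rintro ⟨h1, h2⟩
        refine ⟨?_, ?_⟩
        · intro hc; rw [if_pos hc] at h1; norm_num at h1
        · by_contra hc; rw [if_neg hc] at h2; norm_num at h2
      · rintro ⟨h1, h2⟩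
        rw [if_neg h1, if_pos h2]
        norm_num
    rwa [hs] at h
  -- Step A : a common side with probability ≥ ε/2
  have hcompl : ∀ i, (stdGauss3 (E i)ᶜ).toReal = 1 - (stdGauss3 (E i)).toReal :=
    fun i => toReal_compl (hEm i)
  have hAlt : (∀ i, ε/2 ≤ (stdGauss3 (E i)).toReal)
      ∨ (∀ i, ε/2 ≤ (stdGauss3 (E i)ᶜ).toReal) := by
    by_cases hall : ∀ i, ε/2 ≤ (stdGauss3 (E i)).toReal
    · exact Or.inl hall
    · push_neg at hall
      obtain ⟨i₀, hi₀⟩ := hall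
      right
      have hcases : ∀ j : Fin 3, j = i₀ ∨ j = i₀ + 1 ∨ j = i₀ + 2 := by
        intro j; fin_cases j <;> fin_cases i₀ <;> simp <;> decide
      intro j
      rcases hcases j with h | h | h
      · subst h; rw [hcompl]; linarith
      · subst h
        have hsub : E (i₀+1) ⊆ ((E i₀)ᶜ ∩ E (i₀+1)) ∪ E i₀ := by
          intro ω hω
          by_cases hm : ω ∈ E i₀
          exacts [Or.inr hm, Or.inl ⟨hm, hω⟩]
        have h2 := toReal_le_add hsub
        rw [hcompl]
        linarith [hnd2 i₀]
      · subst h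
        have h21 : i₀ + 2 + 1 = i₀ := by fin_cases i₀ <;> decide
        have hsub : E (i₀+2) ⊆ (E (i₀+2) ∩ (E (i₀+2+1))ᶜ) ∪ E (i₀+2+1) := by
          intro ω hω
          by_cases hm : ω ∈ E (i₀+2+1)
          exacts [Or.inr hm, Or.inl ⟨hω, hm⟩]
        have h2 := toReal_le_add hsub
        rw [h21] at h2
        rw [hcompl]
        have h3 := hnd1 (i₀+2)
        rw [h21] at h3
        linarith
  -- the direction vector
  set v : Fin 3 → ℝ := fun k => ∑ i, A i k with hv
  have e01 : (0:Fin 3)+1 = 1 := rfl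
  have e12 : (1:Fin 3)+1 = 2 := rfl
  have e20 : (2:Fin 3)+1 = 0 := rfl
  have h0 := hvar 0; have h1 := hvar 1; have h2 := hvar 2
  have c0 := hcov 0; have c1 := hcov 1; have c2 := hcov 2
  rw [e01] at c0; rw [e12] at c1; rw [e20] at c2
  simp only [Fin.sum_univ_three] at h0 h1 h2 c0 c1 c2
  have hw1 : ∑ k, v k ^ 2 = 1 := by
    simp only [hv, Fin.sum_univ_three]
    linear_combination h0 + h1 + h2 + 2*c0 + 2*c1 + 2*c2
  have hwneg : ∑ k, (-v k) ^ 2 = 1 := by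
    simpa [neg_sq] using hw1
  have hav0 : A 0 0 * v 0 + A 0 1 * v 1 + A 0 2 * v 2 = 1/3 := by
    simp only [hv, Fin.sum_univ_three]
    linear_combination h0 + c0 + c2
  have hav1 : A 1 0 * v 0 + A 1 1 * v 1 + A 1 2 * v 2 = 1/3 := by
    simp only [hv, Fin.sum_univ_three]
    linear_combination h1 + c0 + c1
  have hav2 : A 2 0 * v 0 + A 2 1 * v 1 + A 2 2 * v 2 = 1/3 := by
    simp only [hv, Fin.sum_univ_three]
    linear_combination h2 + c1 + c2
  have hav : ∀ i, A i 0 * v 0 + A i 1 * v 1 + A i 2 * v 2 = 1/3 := by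
    intro i
    fin_cases i
    exacts [hav0, hav1, hav2]
  rcases hAlt with hpos | hneg
  · -- positive side
    set T := max (max (t 0) (max (t 1) (t 2))) 0 with hT
    have hT0 : 0 ≤ T := le_max_right _ _
    have hti : ∀ i, t i ≤ T := by
      intro i
      fin_cases i
      · exact le_max_of_le_left (le_max_left _ _)
      · exact le_max_of_le_left (le_max_of_le_right (le_max_left _ _))
      · exact le_max_of_le_left (le_max_of_le_right (le_max_right _ _))
    have htail : ∀ j : Fin 3, T = t j → ε/2 ≤ (1/2) * Real.exp (-T^2/2) := by
      intro j hj
      have htb := tail_bound (A j) (hvar j) hT0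
      have hEj : E j = {ω : Fin 3 → ℝ | T ≤ ∑ k, A j k * ω k} := by rw [hE, hj]
      calc ε/2 ≤ (stdGauss3 (E j)).toReal := hpos j
        _ ≤ (1/2) * Real.exp (-T^2/2) := by
            rw [hEj]
            exact ENNReal.toReal_le_of_le_ofReal (by positivity) htb
    have hεT : ε/2 ≤ (1/2) * Real.exp (-T^2/2) := by
      rcases max_choice (max (t 0) (max (t 1) (t 2))) 0 with h | h
      · have hT3 : T = max (t 0) (max (t 1) (t 2)) := h
        rcases max_choice (t 0) (max (t 1) (t 2)) with h' | h'
        · exact htail 0 (hT3.trans h')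
        · rcases max_choice (t 1) (t 2) with h'' | h''
          · exact htail 1 ((hT3.trans h').trans h'')
          · exact htail 2 ((hT3.trans h').trans h'')
      · have hTz : T = 0 := h
        rw [hTz]
        norm_num [Real.exp_zero]
        linarith
    apply main_from v hw1 T hT0 hε0 hεT
    intro ω hω
    have hcoord : ∀ k : Fin 3, (3*(T+1/2)) * v k - 1/4 ≤ ω k ∧ ω k ≤ (3*(T+1/2)) * v k + 1/4 := by
      intro k
      have := hω k (Set.mem_univ k)
      exact ⟨this.1, this.2⟩
    have hLi : ∀ i, t i ≤ ∑ k, A i k * ω k := by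
      intro i
      have habs := abs3_le (A i) (hvar i)
      have hd0 := mul_dev_lower (A i 0) (ω 0) ((3*(T+1/2)) * v 0) (hcoord 0).1 (hcoord 0).2
      have hd1 := mul_dev_lower (A i 1) (ω 1) ((3*(T+1/2)) * v 1) (hcoord 1).1 (hcoord 1).2
      have hd2 := mul_dev_lower (A i 2) (ω 2) ((3*(T+1/2)) * v 2) (hcoord 2).1 (hcoord 2).2
      have hsum : A i 0 * ((3*(T+1/2)) * v 0) + A i 1 * ((3*(T+1/2)) * v 1)
          + A i 2 * ((3*(T+1/2)) * v 2) = T + 1/2 := by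
        linear_combination (3*(T+1/2)) * hav i
      simp only [Fin.sum_univ_three]
      have hTi := hti i
      nlinarith [abs_nonneg (A i 0), abs_nonneg (A i 1), abs_nonneg (A i 2)]
    have hthr : ∀ i, thresh (t i) (∑ k, A i k * ω k) = 1 := by
      intro i
      unfold thresh
      rw [if_pos (hLi i)]
    exact ⟨(hthr 0).trans (hthr 1).symm, (hthr 1).trans (hthr 2).symm⟩
  · -- negative side
    set T := max (max (-t 0) (max (-t 1) (-t 2))) 0 with hT
    have hT0 : 0 ≤ T := le_max_right _ _
    have hti : ∀ i, -t i ≤ T := by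
      intro i
      fin_cases i
      · exact le_max_of_le_left (le_max_left _ _)
      · exact le_max_of_le_left (le_max_of_le_right (le_max_left _ _))
      · exact le_max_of_le_left (le_max_of_le_right (le_max_right _ _))
    have htail : ∀ j : Fin 3, T = -t j → ε/2 ≤ (1/2) * Real.exp (-T^2/2) := by
      intro j hj
      have hunit : ∑ k, (fun k => -A j k) k ^ 2 = 1 := by
        simpa [neg_sq] using hvar j
      have htb := tail_bound (fun k => -A j k) hunit hT0
      have hsub : (E j)ᶜ ⊆ {ω : Fin 3 → ℝ | T ≤ ∑ k, (fun k => -A j k) k * ω k} := by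
        intro ω hω
        simp only [hE, Set.mem_compl_iff, Set.mem_setOf_eq, not_le] at hω
        simp only [Set.mem_setOf_eq, neg_mul]
        rw [Finset.sum_neg_distrib, hj]
        linarith
      calc ε/2 ≤ (stdGauss3 (E j)ᶜ).toReal := hneg j
        _ ≤ (stdGauss3 {ω : Fin 3 → ℝ | T ≤ ∑ k, (fun k => -A j k) k * ω k}).toReal :=
            ENNReal.toReal_mono (measure_ne_top _ _) (measure_mono hsub)
        _ ≤ (1/2) * Real.exp (-T^2/2) :=
            ENNReal.toReal_le_of_le_ofReal (by positivity) htb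
    have hεT : ε/2 ≤ (1/2) * Real.exp (-T^2/2) := by
      rcases max_choice (max (-t 0) (max (-t 1) (-t 2))) 0 with h | h
      · have hT3 : T = max (-t 0) (max (-t 1) (-t 2)) := h
        rcases max_choice (-t 0) (max (-t 1) (-t 2)) with h' | h'
        · exact htail 0 (hT3.trans h')
        · rcases max_choice (-t 1) (-t 2) with h'' | h''
          · exact htail 1 ((hT3.trans h').trans h'')
          · exact htail 2 ((hT3.trans h').trans h'')
      · have hTz : T = 0 := h
        rw [hTz]
        norm_num [Real.exp_zero]
        linarith
    apply main_from (fun k => -v k) hwneg T hT0 hε0 hεT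
    intro ω hω
    have hcoord : ∀ k : Fin 3, (3*(T+1/2)) * (-v k) - 1/4 ≤ ω k ∧ ω k ≤ (3*(T+1/2)) * (-v k) + 1/4 := by
      intro k
      have := hω k (Set.mem_univ k)
      exact ⟨this.1, this.2⟩
    have hLi : ∀ i, ¬ (t i ≤ ∑ k, A i k * ω k) := by
      intro i
      have habs := abs3_le (A i) (hvar i)
      have hd0 := mul_dev_upper (A i 0) (ω 0) ((3*(T+1/2)) * (-v 0)) (hcoord 0).1 (hcoord 0).2
      have hd1 := mul_dev_upper (A i 1) (ω 1) ((3*(T+1/2)) * (-v 1)) (hcoord 1).1 (hcoord 1).2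
      have hd2 := mul_dev_upper (A i 2) (ω 2) ((3*(T+1/2)) * (-v 2)) (hcoord 2).1 (hcoord 2).2
      have hsum : A i 0 * ((3*(T+1/2)) * (-v 0)) + A i 1 * ((3*(T+1/2)) * (-v 1))
          + A i 2 * ((3*(T+1/2)) * (-v 2)) = -(T + 1/2) := by
        linear_combination (-(3*(T+1/2))) * hav i
      simp only [Fin.sum_univ_three, not_le]
      have hTi := hti i
      nlinarith [abs_nonneg (A i 0), abs_nonneg (A i 1), abs_nonneg (A i 2)]
    have hthr : ∀ i, thresh (t i) (∑ k, A i k * ω k) = -1 := by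
      intro i
      unfold thresh
      rw [if_neg (hLi i)]
    exact ⟨(hthr 0).trans (hthr 1).symm, (hthr 1).trans (hthr 2).symm⟩
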